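/- For every λ > 0 the equation B_c(s) = λ·s has exactly one root s in the interval [0,1], and this root satisfies 0 < s < 1. -/

import Mathlib

open Set Filter Topology

/-- The generating function `B_i(s) = ∑_{j≥0} b_j s^j + (i-1) b_0 (1-s)`. -/
noncomputable def Bi (b : ℕ → ℝ) (i : ℕ) (s : ℝ) : ℝ :=
  (∑' j : ℕ, b j * s ^ j) + ((i : ℝ) - 1) * b 0 * (1 - s)

theorem stmt2 (c : ℕ) (hc : 1 ≤ c) (b : ℕ → ℝ)
    (hbnn : ∀ j : ℕ, j ≠ 1 → 0 ≤ b j) (hb0 : 0 < b 0)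
    (hbsum : Summable b) (hbzero : (∑' j : ℕ, b j) = 0)
    (hb2 : 0 < ∑' j : ℕ, b (j + 2)) :
    ∀ lam : ℝ, 0 < lam →
      ∃ s ∈ Set.Ioo (0 : ℝ) 1, Bi b c s = lam * s ∧
        ∀ t ∈ Set.Icc (0 : ℝ) 1, Bi b c t = lam * t → t = s := by
  intro lam hlam
  have hbabs : Summable fun j => |b j| := hbsum.abs
  -- summability of the series for |s| ≤ 1
  have hsum : ∀ s : ℝ, |s| ≤ 1 → Summable fun j => b j * s ^ j := by
    intro s hs
    apply Summable.of_norm_bounded hbabs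
    intro j
    rw [norm_mul, norm_pow, Real.norm_eq_abs, Real.norm_eq_abs]
    have h1 : |s| ^ j ≤ 1 := pow_le_one₀ (abs_nonneg s) hs
    nlinarith [abs_nonneg (b j), pow_nonneg (abs_nonneg s) j]
  have hsum2 : ∀ s : ℝ, |s| ≤ 1 → Summable fun j => b (j + 2) * s ^ (j + 2) := by
    intro s hs
    exact (summable_nat_add_iff (f := fun j => b j * s ^ j) 2).2 (hsum s hs)
  -- splitting off the first two terms
  have hsplit : ∀ s : ℝ, |s| ≤ 1 →
      (∑' j : ℕ, b j * s ^ j)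
        = b 0 + b 1 * s + ∑' j : ℕ, b (j + 2) * s ^ (j + 2) := by
    intro s hs
    rw [Summable.tsum_eq_zero_add (hsum s hs),
      Summable.tsum_eq_zero_add ((summable_nat_add_iff (f := fun j => b j * s ^ j) 1).2 (hsum s hs))]
    rw [tsum_congr (fun j => by norm_num :
      ∀ j : ℕ, b (j + 1 + 1) * s ^ (j + 1 + 1) = b (j + 2) * s ^ (j + 2))]
    norm_num
    ring
  -- abs bound for elements of Icc 0 1
  have habs : ∀ s : ℝ, s ∈ Icc (0:ℝ) 1 → |s| ≤ 1 := by
    intro s hs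
    rw [abs_le]; exact ⟨by linarith [hs.1], hs.2⟩
  -- the function whose root we seek
  set f : ℝ → ℝ := fun s => Bi b c s - lam * s with hf
  have hf_eq : ∀ s ∈ Icc (0:ℝ) 1,
      f s = (∑' j : ℕ, b (j + 2) * s ^ (j + 2))
        + (b 0 + ((c : ℝ) - 1) * b 0) + (b 1 - ((c : ℝ) - 1) * b 0 - lam) * s := by
    intro s hs
    simp only [hf, Bi]
    rw [hsplit s (habs s hs)]
    ring
  -- convexity of the tail sum
  have hgconv : ∀ x ∈ Icc (0:ℝ) 1, ∀ y ∈ Icc (0:ℝ) 1, ∀ a a' : ℝ,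
      0 ≤ a → 0 ≤ a' → a + a' = 1 →
      (∑' j : ℕ, b (j + 2) * (a * x + a' * y) ^ (j + 2))
        ≤ a * (∑' j : ℕ, b (j + 2) * x ^ (j + 2))
          + a' * (∑' j : ℕ, b (j + 2) * y ^ (j + 2)) := by
    intro x hx y hy a a' ha ha' haa
    have hz : a * x + a' * y ∈ Icc (0:ℝ) 1 := by
      constructor
      · nlinarith [hx.1, hy.1]
      · nlinarith [hx.2, hy.2]
    have h1 := hsum2 x (habs x hx)
    have h2 := hsum2 y (habs y hy)
    have hzs := hsum2 _ (habs _ hz)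
    rw [← tsum_mul_left, ← tsum_mul_left, ← Summable.tsum_add (h1.mul_left a) (h2.mul_left a')]
    apply Summable.tsum_le_tsum _ hzs ((h1.mul_left a).add (h2.mul_left a'))
    intro j
    have hbj : 0 ≤ b (j + 2) := hbnn (j + 2) (by omega)
    have hpow := (convexOn_pow (j + 2)).2 (mem_Ici.2 hx.1) (mem_Ici.2 hy.1) ha ha' haa
    simp only [smul_eq_mul] at hpow
    nlinarith [mul_le_mul_of_nonneg_left hpow hbj]
  -- convexity of f
  have hconv : ConvexOn ℝ (Icc (0:ℝ) 1) f := by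
    refine ⟨convex_Icc 0 1, ?_⟩
    intro x hx y hy a a' ha ha' haa
    have hz : a • x + a' • y ∈ Icc (0:ℝ) 1 :=
      (convex_Icc (0:ℝ) 1) hx hy ha ha' haa
    simp only [smul_eq_mul] at hz ⊢
    rw [hf_eq _ hz, hf_eq _ hx, hf_eq _ hy]
    have := hgconv x hx y hy a a' ha ha' haa
    have hre : a * ((∑' j : ℕ, b (j + 2) * x ^ (j + 2)) + (b 0 + ((c:ℝ) - 1) * b 0)
          + (b 1 - ((c:ℝ) - 1) * b 0 - lam) * x)
        + a' * ((∑' j : ℕ, b (j + 2) * y ^ (j + 2)) + (b 0 + ((c:ℝ) - 1) * b 0)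
          + (b 1 - ((c:ℝ) - 1) * b 0 - lam) * y)
        = a * (∑' j : ℕ, b (j + 2) * x ^ (j + 2)) + a' * (∑' j : ℕ, b (j + 2) * y ^ (j + 2))
          + (b 0 + ((c:ℝ) - 1) * b 0) + (b 1 - ((c:ℝ) - 1) * b 0 - lam) * (a * x + a' * y) := by
      linear_combination (b 0 + ((c:ℝ) - 1) * b 0) * haa
    rw [hre]
    linarith [this]
  -- continuity of f on [0,1]
  have hFcont : ContinuousOn (fun s : ℝ => ∑' j : ℕ, b j * s ^ j) (Icc (0:ℝ) 1) := by
    apply continuousOn_tsum (u := fun j => |b j|)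
      (fun j => (continuous_const.mul (continuous_pow j)).continuousOn) hbabs
    intro j s hs
    show ‖b j * s ^ j‖ ≤ |b j|
    rw [norm_mul, norm_pow, Real.norm_eq_abs, Real.norm_eq_abs]
    have h1 : |s| ^ j ≤ 1 := pow_le_one₀ (abs_nonneg s) (habs s hs)
    nlinarith [abs_nonneg (b j), pow_nonneg (abs_nonneg s) j]
  have hcont : ContinuousOn f (Icc (0:ℝ) 1) := by
    simp only [hf, Bi]
    fun_prop
  -- boundary values
  have hf0 : f 0 = (c : ℝ) * b 0 := by
    simp only [hf, Bi]
    rw [tsum_eq_single 0 (fun j hj => by simp [zero_pow hj])]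
    simp; ring
  have hf1 : f 1 = -lam := by
    simp only [hf, Bi]
    simp [hbzero]
  have hf0pos : 0 < f 0 := by
    rw [hf0]
    have : (1:ℝ) ≤ c := by exact_mod_cast hc
    nlinarith
  have hf1neg : f 1 < 0 := by rw [hf1]; linarith
  -- intermediate value theorem
  have hivt := intermediate_value_Icc' (by norm_num : (0:ℝ) ≤ 1) hcont
  have h0mem : (0:ℝ) ∈ Icc (f 1) (f 0) := ⟨le_of_lt hf1neg, le_of_lt hf0pos⟩
  obtain ⟨s, hsmem, hfs⟩ := hivt h0mem
  have hs0 : s ≠ 0 := by rintro rfl; rw [hfs] at hf0pos; exact lt_irrefl _ hf0pos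
  have hs1 : s ≠ 1 := by rintro rfl; rw [hfs] at hf1neg; exact lt_irrefl _ hf1neg
  have hsIoo : s ∈ Ioo (0:ℝ) 1 :=
    ⟨lt_of_le_of_ne hsmem.1 (Ne.symm hs0), lt_of_le_of_ne hsmem.2 hs1⟩
  refine ⟨s, hsIoo, by simp only [hf] at hfs; linarith, ?_⟩
  -- uniqueness
  intro t ht hBt
  have hft : f t = 0 := by simp only [hf]; linarith
  by_contra hne
  -- a root strictly below another root in [0,1) contradicts convexity with f 1 < 0
  have key : ∀ u v : ℝ, u ∈ Icc (0:ℝ) 1 → v ∈ Icc (0:ℝ) 1 → f u = 0 → f v = 0 →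
      u < v → False := by
    intro u v hu hv hfu hfv huv
    have hv1 : v < 1 := by
      rcases lt_or_eq_of_le hv.2 with h | h
      · exact h
      · rw [h] at hfv; rw [hfv] at hf1neg; exact absurd hf1neg (lt_irrefl 0)
    set a : ℝ := (1 - v) / (1 - u) with hA
    set a' : ℝ := (v - u) / (1 - u) with hA'
    have hu1 : (0:ℝ) < 1 - u := by linarith
    have hne0 : (1:ℝ) - u ≠ 0 := ne_of_gt hu1
    have ha : 0 ≤ a := by
      apply div_nonneg <;> linarith
    have ha' : 0 ≤ a' := by
      apply div_nonneg <;> linarith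
    have haa : a + a' = 1 := by
      rw [hA, hA', ← add_div, show (1 - v) + (v - u) = 1 - u by ring]
      exact div_self hne0
    have hcomb : a • u + a' • (1:ℝ) = v := by
      simp only [smul_eq_mul, mul_one]
      rw [hA, hA', div_mul_eq_mul_div, ← add_div,
        show (1 - v) * u + (v - u) = v * (1 - u) by ring, mul_div_assoc,
        div_self hne0, mul_one]
    have h1mem : (1:ℝ) ∈ Icc (0:ℝ) 1 := ⟨by norm_num, le_refl 1⟩
    have := hconv.2 hu h1mem ha ha' haa
    rw [hcomb] at this
    simp only [smul_eq_mul, hfu, hfv] at this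
    have ha'pos : 0 < a' := by
      apply div_pos <;> linarith
    nlinarith [this, hf1neg]
  rcases lt_trichotomy t s with h | h | h
  · exact absurd (key t s ht hsmem hft hfs h) id
  · exact hne h
  · exact absurd (key s t hsmem ht hfs hft h) id
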